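/- The function Φ is differentiable at every W ∈ (0,∞)^{ℛ̂×𝒵×𝒳}, and its partial derivative with respect to the coordinate W(r̂₀,z₀,x₀) equals p(z₀,x₀) · log₂( a(r̂₀,x₀) / ( p(x₀) · b(r̂₀) ) ). In particular, at a channel W this derivative equals p(z₀,x₀) · log₂( p(r̂₀|x₀) / p(r̂₀) ), where p(r̂|x) and p(r̂) are the induced conditional and marginal distributions of R̂. -/

import Mathlib

open Real Finset

noncomputable section

variable {ℛh 𝒵 𝒳 : Type} [Fintype ℛh] [Fintype 𝒵] [Fintype 𝒳]
  [DecidableEq ℛh] [DecidableEq 𝒵] [DecidableEq 𝒳]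

/-- `a(r̂,x) = ∑_z W(r̂,z,x) p(z,x)`. -/
def aFun (p : 𝒵 → 𝒳 → ℝ) (W : ℛh × 𝒵 × 𝒳 → ℝ) (rh : ℛh) (x : 𝒳) : ℝ :=
  ∑ z, W (rh, z, x) * p z x

/-- `b(r̂) = ∑_{z,x} W(r̂,z,x) p(z,x)`. -/
def bFun (p : 𝒵 → 𝒳 → ℝ) (W : ℛh × 𝒵 × 𝒳 → ℝ) (rh : ℛh) : ℝ :=
  ∑ z, ∑ x, W (rh, z, x) * p z x

/-- Marginal `p(x) = ∑_z p(z,x)`. -/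
def pXm (p : 𝒵 → 𝒳 → ℝ) (x : 𝒳) : ℝ := ∑ z, p z x

/-- `Φ(W) = ∑_{r̂,x} a(r̂,x) log₂( a(r̂,x) / (p(x) b(r̂)) )`; at a channel `W` this equals
the mutual information `I(R̂;X)` of the joint distribution induced by `W` and `p`. -/
def Phi (p : 𝒵 → 𝒳 → ℝ) (W : ℛh × 𝒵 × 𝒳 → ℝ) : ℝ :=
  ∑ rh, ∑ x, aFun p W rh x * logb 2 (aFun p W rh x / (pXm p x * bFun p W rh))

/-- The continuous linear map `W ↦ a(r̂,x)`. -/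
def Aclm (p : 𝒵 → 𝒳 → ℝ) (rh : ℛh) (x : 𝒳) : (ℛh × 𝒵 × 𝒳 → ℝ) →L[ℝ] ℝ :=
  ∑ z, p z x • ContinuousLinearMap.proj (R := ℝ) (φ := fun _ : ℛh × 𝒵 × 𝒳 => ℝ) (rh, z, x)

/-- The continuous linear map `W ↦ b(r̂)`. -/
def Bclm (p : 𝒵 → 𝒳 → ℝ) (rh : ℛh) : (ℛh × 𝒵 × 𝒳 → ℝ) →L[ℝ] ℝ :=
  ∑ x, Aclm p rh x

lemma Aclm_apply (p : 𝒵 → 𝒳 → ℝ) (rh : ℛh) (x : 𝒳) (W : ℛh × 𝒵 × 𝒳 → ℝ) :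
    Aclm p rh x W = aFun p W rh x := by
  simp [Aclm, aFun, ContinuousLinearMap.sum_apply, mul_comm]

lemma Bclm_apply (p : 𝒵 → 𝒳 → ℝ) (rh : ℛh) (W : ℛh × 𝒵 × 𝒳 → ℝ) :
    Bclm p rh W = bFun p W rh := by
  simp only [Bclm, ContinuousLinearMap.sum_apply, Aclm_apply, aFun, bFun]
  exact Finset.sum_comm

lemma sum_aFun (p : 𝒵 → 𝒳 → ℝ) (W : ℛh × 𝒵 × 𝒳 → ℝ) (rh : ℛh) :
    ∑ x, aFun p W rh x = bFun p W rh := by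
  simp only [aFun, bFun]; exact Finset.sum_comm

/-- `Φ` is differentiable at every `W ∈ (0,∞)^{ℛ̂×𝒵×𝒳}`, with partial
derivative w.r.t. the coordinate `W(r̂₀,z₀,x₀)` equal to
`p(z₀,x₀) log₂( a(r̂₀,x₀) / (p(x₀) b(r̂₀)) )`.  In particular, at a channel `W` this
derivative equals `p(z₀,x₀) log₂( p(r̂₀|x₀) / p(r̂₀) )`, where
`p(r̂|x) = a(r̂,x)/p(x)` and `p(r̂) = b(r̂)` are the induced conditional and marginal
distributions of `R̂`. -/
theorem statement11
    (p : 𝒵 → 𝒳 → ℝ)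
    (hp_pos : ∀ z x, 0 < p z x) (hp_sum : ∑ z, ∑ x, p z x = 1)
    (W : ℛh × 𝒵 × 𝒳 → ℝ) (hW : ∀ i, 0 < W i)
    (rh₀ : ℛh) (z₀ : 𝒵) (x₀ : 𝒳) :
    DifferentiableAt ℝ (Phi p) W ∧
    fderiv ℝ (Phi p) W (Pi.single (rh₀, z₀, x₀) 1) =
      p z₀ x₀ * logb 2 (aFun p W rh₀ x₀ / (pXm p x₀ * bFun p W rh₀)) ∧
    ((∀ z x, ∑ rh, W (rh, z, x) = 1) →
      fderiv ℝ (Phi p) W (Pi.single (rh₀, z₀, x₀) 1) =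
        p z₀ x₀ * logb 2 ((aFun p W rh₀ x₀ / pXm p x₀) / bFun p W rh₀)) := by
  classical
  have hZne : Nonempty 𝒵 := ⟨z₀⟩
  have hXne : Nonempty 𝒳 := ⟨x₀⟩
  -- positivity
  have hpx : ∀ x, 0 < pXm p x := fun x =>
    Finset.sum_pos (fun z _ => hp_pos z x) Finset.univ_nonempty
  have ha_pos : ∀ (W' : ℛh × 𝒵 × 𝒳 → ℝ), (∀ i, 0 < W' i) → ∀ rh x, 0 < aFun p W' rh x := by
    intro W' hW' rh x
    exact Finset.sum_pos (fun z _ => mul_pos (hW' _) (hp_pos z x)) Finset.univ_nonempty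
  have hb_pos : ∀ (W' : ℛh × 𝒵 × 𝒳 → ℝ), (∀ i, 0 < W' i) → ∀ rh, 0 < bFun p W' rh := by
    intro W' hW' rh
    rw [← sum_aFun]
    exact Finset.sum_pos (fun x _ => ha_pos W' hW' rh x) Finset.univ_nonempty
  -- HasFDerivAt for a and b
  have hA : ∀ rh x, HasFDerivAt (fun W' => aFun p W' rh x) (Aclm p rh x) W := by
    intro rh x
    exact (Aclm p rh x).hasFDerivAt.congr_of_eventuallyEq
      (Filter.Eventually.of_forall fun W' => (Aclm_apply p rh x W').symm)
  have hB : ∀ rh, HasFDerivAt (fun W' => bFun p W' rh) (Bclm p rh) W := by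
    intro rh
    exact (Bclm p rh).hasFDerivAt.congr_of_eventuallyEq
      (Filter.Eventually.of_forall fun W' => (Bclm_apply p rh W').symm)
  -- term derivative
  set D : ℛh → 𝒳 → (ℛh × 𝒵 × 𝒳 → ℝ) →L[ℝ] ℝ := fun rh x =>
    aFun p W rh x • ((aFun p W rh x)⁻¹ • Aclm p rh x - (bFun p W rh)⁻¹ • Bclm p rh)
      + (Real.log (aFun p W rh x) - Real.log (pXm p x) - Real.log (bFun p W rh)) • Aclm p rh x
    with hD
  have hterm : ∀ rh x, HasFDerivAt
      (fun W' => aFun p W' rh x *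
        (Real.log (aFun p W' rh x) - Real.log (pXm p x) - Real.log (bFun p W' rh)))
      (D rh x) W := by
    intro rh x
    have h1 := hA rh x
    have h2 := hB rh
    have hlog1 := h1.log (ne_of_gt (ha_pos W hW rh x))
    have hlog2 := h2.log (ne_of_gt (hb_pos W hW rh))
    exact h1.mul ((hlog1.sub_const (Real.log (pXm p x))).sub hlog2)
  have hsum : HasFDerivAt
      (fun W' => (Real.log 2)⁻¹ * ∑ rh, ∑ x, aFun p W' rh x *
        (Real.log (aFun p W' rh x) - Real.log (pXm p x) - Real.log (bFun p W' rh)))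
      ((Real.log 2)⁻¹ • ∑ rh, ∑ x, D rh x) W := by
    refine HasFDerivAt.const_mul ?_ _
    exact HasFDerivAt.fun_sum (fun rh _ => HasFDerivAt.fun_sum (fun x _ => hterm rh x))
  -- eventual equality of Phi with the smooth expression
  have hev : Phi p =ᶠ[nhds W]
      (fun W' => (Real.log 2)⁻¹ * ∑ rh, ∑ x, aFun p W' rh x *
        (Real.log (aFun p W' rh x) - Real.log (pXm p x) - Real.log (bFun p W' rh))) := by
    have hopen : ∀ᶠ W' in nhds W, ∀ i, 0 < W' i := by
      rw [Filter.eventually_all]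
      intro i
      exact (isOpen_lt continuous_const (continuous_apply i)).mem_nhds (hW i)
    filter_upwards [hopen] with W' hW'
    unfold Phi
    rw [Finset.mul_sum]
    refine Finset.sum_congr rfl fun rh _ => ?_
    rw [Finset.mul_sum]
    refine Finset.sum_congr rfl fun x _ => ?_
    have ha := ha_pos W' hW' rh x
    have hb := hb_pos W' hW' rh
    rw [Real.logb, Real.log_div (ne_of_gt ha) (ne_of_gt (mul_pos (hpx x) hb)),
      Real.log_mul (ne_of_gt (hpx x)) (ne_of_gt hb)]
    ring
  have hL : HasFDerivAt (Phi p) ((Real.log 2)⁻¹ • ∑ rh, ∑ x, D rh x) W :=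
    hsum.congr_of_eventuallyEq hev
  -- values of Aclm and Bclm at the basis direction
  have hAv : ∀ rh x, Aclm p rh x (Pi.single (rh₀, z₀, x₀) (1:ℝ)) =
      if rh = rh₀ ∧ x = x₀ then p z₀ x₀ else 0 := by
    intro rh x
    rw [Aclm_apply]
    unfold aFun
    simp only [Pi.single_apply, Prod.mk.injEq, ite_mul, one_mul, zero_mul]
    by_cases h : rh = rh₀ ∧ x = x₀
    · obtain ⟨h1, h2⟩ := h
      rw [if_pos ⟨h1, h2⟩]
      simp [h1, h2, Finset.sum_ite_eq']
    · rw [if_neg h]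
      refine Finset.sum_eq_zero fun z _ => ?_
      rcases not_and_or.mp h with h' | h' <;> simp [h']
  have hBv : ∀ rh, Bclm p rh (Pi.single (rh₀, z₀, x₀) (1:ℝ)) =
      if rh = rh₀ then p z₀ x₀ else 0 := by
    intro rh
    simp only [Bclm, ContinuousLinearMap.sum_apply, hAv]
    by_cases h : rh = rh₀
    · subst h
      rw [if_pos rfl, Finset.sum_eq_single x₀]
      · simp
      · intro x _ hx; simp [hx]
      · simp
    · rw [if_neg h]
      refine Finset.sum_eq_zero fun x _ => ?_
      simp [h]
  -- compute the derivative value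
  have hval : ((Real.log 2)⁻¹ • ∑ rh, ∑ x, D rh x) (Pi.single (rh₀, z₀, x₀) (1:ℝ)) =
      p z₀ x₀ * logb 2 (aFun p W rh₀ x₀ / (pXm p x₀ * bFun p W rh₀)) := by
    rw [ContinuousLinearMap.smul_apply, ContinuousLinearMap.sum_apply]
    have hcalc : ∑ rh, (∑ x, D rh x) (Pi.single (rh₀, z₀, x₀) (1:ℝ)) =
        p z₀ x₀ * (Real.log (aFun p W rh₀ x₀) - Real.log (pXm p x₀)
          - Real.log (bFun p W rh₀)) := by
      rw [Finset.sum_eq_single rh₀]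
      · rw [ContinuousLinearMap.sum_apply]
        have hterm' : ∀ x, D rh₀ x (Pi.single (rh₀, z₀, x₀) (1:ℝ)) =
            (aFun p W rh₀ x * ((aFun p W rh₀ x)⁻¹ * (if x = x₀ then p z₀ x₀ else 0)
              - (bFun p W rh₀)⁻¹ * (p z₀ x₀))
            + (Real.log (aFun p W rh₀ x) - Real.log (pXm p x) - Real.log (bFun p W rh₀))
              * (if x = x₀ then p z₀ x₀ else 0)) := by
          intro x
          simp only [hD, ContinuousLinearMap.add_apply, ContinuousLinearMap.smul_apply,
            ContinuousLinearMap.sub_apply, hAv, hBv, smul_eq_mul, true_and, if_true]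
        rw [Finset.sum_congr rfl fun x _ => hterm' x]
        have expand : ∀ x, (aFun p W rh₀ x * ((aFun p W rh₀ x)⁻¹ * (if x = x₀ then p z₀ x₀ else 0)
              - (bFun p W rh₀)⁻¹ * (p z₀ x₀))
            + (Real.log (aFun p W rh₀ x) - Real.log (pXm p x) - Real.log (bFun p W rh₀))
              * (if x = x₀ then p z₀ x₀ else 0)) =
            (if x = x₀ then (1 + (Real.log (aFun p W rh₀ x) - Real.log (pXm p x)
              - Real.log (bFun p W rh₀))) * p z₀ x₀ else 0)
            - aFun p W rh₀ x * ((bFun p W rh₀)⁻¹ * p z₀ x₀) := by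
          intro x
          by_cases h : x = x₀
          · subst h
            rw [if_pos rfl, if_pos rfl]
            have := (ha_pos W hW rh₀ x).ne'
            field_simp
            ring
          · rw [if_neg h, if_neg h]
            ring
        rw [Finset.sum_congr rfl fun x _ => expand x, Finset.sum_sub_distrib,
          Finset.sum_ite_eq' Finset.univ x₀, if_pos (Finset.mem_univ x₀)]
        have : ∑ x, aFun p W rh₀ x * ((bFun p W rh₀)⁻¹ * p z₀ x₀) =
            (∑ x, aFun p W rh₀ x) * ((bFun p W rh₀)⁻¹ * p z₀ x₀) := by
          rw [Finset.sum_mul]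
        rw [this, sum_aFun]
        have hbne := (hb_pos W hW rh₀).ne'
        field_simp
        ring
      · intro rh _ hrh
        rw [ContinuousLinearMap.sum_apply]
        refine Finset.sum_eq_zero fun x _ => ?_
        simp only [hD, ContinuousLinearMap.add_apply, ContinuousLinearMap.smul_apply,
          ContinuousLinearMap.sub_apply, hAv, hBv, if_neg hrh, smul_eq_mul]
        have : ¬(rh = rh₀ ∧ x = x₀) := fun hc => hrh hc.1
        rw [if_neg this]
        ring
      · simp
    rw [hcalc]
    have ha := ha_pos W hW rh₀ x₀
    have hb := hb_pos W hW rh₀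
    rw [Real.logb, Real.log_div (ne_of_gt ha) (ne_of_gt (mul_pos (hpx x₀) hb)),
      Real.log_mul (ne_of_gt (hpx x₀)) (ne_of_gt hb), smul_eq_mul]
    ring
  refine ⟨hL.differentiableAt, ?_, ?_⟩
  · rw [hL.fderiv]; exact hval
  · intro _
    rw [hL.fderiv, hval, div_div]

end
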